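/- Let X1, X2, X3, Y, U1, U2, U3, U4 be discrete random variables whose joint law factorizes as P_{X1,X2,X3,Y} · P_{U1|X1} · P_{U2|X2} · P_{U3|X3} · P_{U4|U2,U3}. Then for every s ≥ 0, -H(Y|U1,U2,U3) - s[ I(X1,X2,X3;U1,U2,U3) + I(X2,X3;U2,U3|U1) ] ≥ -H(Y|U1,U4) - s·I(X1;U1) - 2s[ I(X2;U2) + I(X3;U3) ] + 2s[ I(U2;U1) + I(U3;U1,U2) ]. -/

import Mathlib

open Real
open scoped BigOperators Classical

noncomputable section

/-- Shannon entropy of a pmf on a finite alphabet. -/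
def ent {α : Type*} [Fintype α] (p : α → ℝ) : ℝ := -∑ x, p x * Real.log (p x)

/-- Kullback–Leibler divergence between pmfs on a finite alphabet. -/
def kl {α : Type*} [Fintype α] (p q : α → ℝ) : ℝ := ∑ x, p x * Real.log (p x / q x)

/-- Marginal pmf of the random variable `f` under joint pmf `p`. -/
def margOf {Ω α : Type*} [Fintype Ω] (p : Ω → ℝ) (f : Ω → α) (a : α) : ℝ :=
  ∑ ω, if f ω = a then p ω else 0

/-- Entropy of the random variable `f` under joint pmf `p`. -/
def entOf {Ω α : Type*} [Fintype Ω] [Fintype α] (p : Ω → ℝ) (f : Ω → α) : ℝ :=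
  ent (margOf p f)

/-- Conditional entropy `H(f | g)` under joint pmf `p`. -/
def condEntOf {Ω α β : Type*} [Fintype Ω] [Fintype α] [Fintype β]
    (p : Ω → ℝ) (f : Ω → α) (g : Ω → β) : ℝ :=
  entOf p (fun ω => (g ω, f ω)) - entOf p g

/-- Mutual information `I(f ; g)` under joint pmf `p`. -/
def miOf {Ω α β : Type*} [Fintype Ω] [Fintype α] [Fintype β]
    (p : Ω → ℝ) (f : Ω → α) (g : Ω → β) : ℝ :=
  entOf p f + entOf p g - entOf p (fun ω => (f ω, g ω))

/-- Conditional mutual information `I(f ; g | h)` under joint pmf `p`. -/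
def cmiOf {Ω α β γ : Type*} [Fintype Ω] [Fintype α] [Fintype β] [Fintype γ]
    (p : Ω → ℝ) (f : Ω → α) (g : Ω → β) (h : Ω → γ) : ℝ :=
  entOf p (fun ω => (h ω, f ω)) + entOf p (fun ω => (h ω, g ω))
    - entOf p (fun ω => (h ω, f ω, g ω)) - entOf p h

section Infra
variable {Ω α β γ : Type*} [Fintype Ω] [Fintype α] [Fintype β] [Fintype γ]

lemma sum_marg (p : Ω → ℝ) (f : Ω → α) (G : α → ℝ) :
    ∑ a, margOf p f a * G a = ∑ ω, p ω * G (f ω) := by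
  simp only [margOf, Finset.sum_mul, ite_mul, zero_mul]
  rw [Finset.sum_comm]
  refine Finset.sum_congr rfl fun ω _ => ?_
  simp

lemma entOf_eq (p : Ω → ℝ) (f : Ω → α) :
    entOf p f = -∑ ω, p ω * Real.log (margOf p f (f ω)) := by
  rw [entOf, ent, sum_marg]

lemma margOf_nonneg (p : Ω → ℝ) (hp : ∀ ω, 0 ≤ p ω) (f : Ω → α) (a : α) :
    0 ≤ margOf p f a :=
  Finset.sum_nonneg fun ω _ => by by_cases h : f ω = a <;> simp [h, hp ω]

lemma le_margOf (p : Ω → ℝ) (hp : ∀ ω, 0 ≤ p ω) (f : Ω → α) (ω : Ω) :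
    p ω ≤ margOf p f (f ω) := by
  rw [margOf]
  refine Finset.single_le_sum (f := fun ω' => if f ω' = f ω then p ω' else 0)
    (fun ω' _ => by by_cases h : f ω' = f ω <;> simp [h, hp ω']) (Finset.mem_univ ω) |>.trans_eq' (by simp)

lemma marg_consistent (p : Ω → ℝ) (f : Ω → α) (g : Ω → β) (a : α) :
    ∑ b, margOf p (fun ω => (f ω, g ω)) (a, b) = margOf p f a := by
  simp only [margOf, Prod.mk.injEq]
  rw [Finset.sum_comm]
  refine Finset.sum_congr rfl fun ω _ => ?_
  by_cases h : f ω = a <;> simp [h]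

lemma sum_margOf (p : Ω → ℝ) (f : Ω → α) : ∑ a, margOf p f a = ∑ ω, p ω := by
  have := sum_marg p f (fun _ => 1)
  simpa using this

lemma cmi_nonneg (p : Ω → ℝ) (hp0 : ∀ ω, 0 ≤ p ω) (hp1 : ∑ ω, p ω = 1)
    (f : Ω → α) (g : Ω → β) (h : Ω → γ) :
    entOf p (fun ω => (h ω, f ω)) + entOf p (fun ω => (h ω, g ω))
      - entOf p (fun ω => ((h ω, g ω), f ω)) - entOf p h ≥ 0 := by
  set m1 := margOf p (fun ω => (h ω, f ω)) with hm1
  set m2 := margOf p (fun ω => (h ω, g ω)) with hm2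
  set m3 := margOf p (fun ω => ((h ω, g ω), f ω)) with hm3
  set m0 := margOf p h with hm0
  have h1 : ∀ v : (γ × β) × α, 0 ≤ m1 (v.1.1, v.2) * m2 v.1 / (m3 v * m0 v.1.1) := by
    intro v
    have := margOf_nonneg p hp0 (fun ω => (h ω, f ω)) (v.1.1, v.2)
    have := margOf_nonneg p hp0 (fun ω => (h ω, g ω)) v.1
    have := margOf_nonneg p hp0 (fun ω => ((h ω, g ω), f ω)) v
    have := margOf_nonneg p hp0 h v.1.1
    positivity
  -- pointwise bound
  have key : ∀ ω, p ω * Real.log (m3 ((h ω, g ω), f ω)) + p ω * Real.log (m0 (h ω))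
      - p ω * Real.log (m1 (h ω, f ω)) - p ω * Real.log (m2 (h ω, g ω))
      ≥ p ω - p ω * (m1 (h ω, f ω) * m2 (h ω, g ω) / (m3 ((h ω, g ω), f ω) * m0 (h ω))) := by
    intro ω
    rcases eq_or_lt_of_le (hp0 ω) with hz | hpos
    · simp [← hz]
    · have hm1p : 0 < m1 (h ω, f ω) := lt_of_lt_of_le hpos (le_margOf p hp0 _ ω)
      have hm2p : 0 < m2 (h ω, g ω) := lt_of_lt_of_le hpos (le_margOf p hp0 _ ω)
      have hm3p : 0 < m3 ((h ω, g ω), f ω) := lt_of_lt_of_le hpos (le_margOf p hp0 _ ω)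
      have hm0p : 0 < m0 (h ω) := lt_of_lt_of_le hpos (le_margOf p hp0 _ ω)
      have hlog : Real.log (m1 (h ω, f ω) * m2 (h ω, g ω) / (m3 ((h ω, g ω), f ω) * m0 (h ω)))
          ≤ m1 (h ω, f ω) * m2 (h ω, g ω) / (m3 ((h ω, g ω), f ω) * m0 (h ω)) - 1 :=
        Real.log_le_sub_one_of_pos (by positivity)
      rw [Real.log_div (by positivity) (by positivity), Real.log_mul hm1p.ne' hm2p.ne',
        Real.log_mul hm3p.ne' hm0p.ne'] at hlog
      nlinarith [hlog, hpos]
  -- sum of the RHS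
  have hsum : ∑ ω, p ω * (m1 (h ω, f ω) * m2 (h ω, g ω) / (m3 ((h ω, g ω), f ω) * m0 (h ω)))
      ≤ 1 := by
    have e1 : ∑ ω, p ω * (m1 (h ω, f ω) * m2 (h ω, g ω) / (m3 ((h ω, g ω), f ω) * m0 (h ω)))
        = ∑ v : (γ × β) × α, m3 v * (m1 (v.1.1, v.2) * m2 v.1 / (m3 v * m0 v.1.1)) := by
      rw [sum_marg p (fun ω => ((h ω, g ω), f ω))
        (fun v => m1 (v.1.1, v.2) * m2 v.1 / (m3 v * m0 v.1.1))]
    rw [e1]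
    have e2 : ∑ v : (γ × β) × α, m3 v * (m1 (v.1.1, v.2) * m2 v.1 / (m3 v * m0 v.1.1))
        ≤ ∑ v : (γ × β) × α, m1 (v.1.1, v.2) * m2 v.1 / m0 v.1.1 := by
      refine Finset.sum_le_sum fun v _ => ?_
      rcases eq_or_ne (m3 v) 0 with h3 | h3
      · rw [h3]
        simp only [zero_mul]
        have := margOf_nonneg p hp0 (fun ω => (h ω, f ω)) (v.1.1, v.2)
        have := margOf_nonneg p hp0 (fun ω => (h ω, g ω)) v.1
        have := margOf_nonneg p hp0 h v.1.1
        positivity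
      · rcases eq_or_ne (m0 v.1.1) 0 with h0 | h0
        · simp [h0]
        · exact le_of_eq (by field_simp)
    refine e2.trans ?_
    have e3 : ∑ v : (γ × β) × α, m1 (v.1.1, v.2) * m2 v.1 / m0 v.1.1
        = ∑ w : γ × β, m0 w.1 * m2 w / m0 w.1 := by
      rw [Fintype.sum_prod_type]
      refine Finset.sum_congr rfl fun w _ => ?_
      simp only []
      rw [← Finset.sum_div, ← Finset.sum_mul, marg_consistent p h f w.1]
    rw [e3]
    have e4 : ∑ w : γ × β, m0 w.1 * m2 w / m0 w.1 ≤ ∑ w : γ × β, m2 w := by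
      refine Finset.sum_le_sum fun w _ => ?_
      rcases eq_or_ne (m0 w.1) 0 with h0 | h0
      · rw [h0]; simpa using margOf_nonneg p hp0 (fun ω => (h ω, g ω)) w
      · exact le_of_eq (by field_simp)
    refine e4.trans ?_
    rw [hm2, sum_margOf, hp1]
  rw [entOf_eq, entOf_eq, entOf_eq, entOf_eq]
  simp only [← hm1, ← hm2, ← hm3, ← hm0]
  have final := Finset.sum_le_sum (s := Finset.univ) (fun ω _ => key ω)
  simp only [Finset.sum_sub_distrib, Finset.sum_add_distrib, hp1] at final
  linarith [final, hsum]

end Infra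

/-- Lemma 1 of the paper: under the factorization
`P_{X1X2X3Y}·P_{U1|X1}·P_{U2|X2}·P_{U3|X3}·P_{U4|U2,U3}`, for every `s ≥ 0`,
`-H(Y|U1,U2,U3) - s[I(X123;U123)+I(X23;U23|U1)]
  ≥ -H(Y|U1,U4) - s I(X1;U1) - 2s[I(X2;U2)+I(X3;U3)] + 2s[I(U2;U1)+I(U3;U1,U2)]`. -/
theorem stmt7 {X1 X2 X3 Y U1 U2 U3 U4 : Type*}
    [Fintype X1] [Fintype X2] [Fintype X3] [Fintype Y]
    [Fintype U1] [Fintype U2] [Fintype U3] [Fintype U4]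
    (pJ : X1 × X2 × X3 × Y → ℝ) (hpJ0 : ∀ v, 0 ≤ pJ v) (hpJ1 : ∑ v, pJ v = 1)
    (k1 : X1 → U1 → ℝ) (hk10 : ∀ x u, 0 ≤ k1 x u) (hk11 : ∀ x, ∑ u, k1 x u = 1)
    (k2 : X2 → U2 → ℝ) (hk20 : ∀ x u, 0 ≤ k2 x u) (hk21 : ∀ x, ∑ u, k2 x u = 1)
    (k3 : X3 → U3 → ℝ) (hk30 : ∀ x u, 0 ≤ k3 x u) (hk31 : ∀ x, ∑ u, k3 x u = 1)
    (k4 : U2 × U3 → U4 → ℝ) (hk40 : ∀ v u, 0 ≤ k4 v u)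
    (hk41 : ∀ v, ∑ u, k4 v u = 1)
    (p : X1 × X2 × X3 × Y × U1 × U2 × U3 × U4 → ℝ)
    (hp : ∀ x1 x2 x3 y u1 u2 u3 u4,
      p (x1, x2, x3, y, u1, u2, u3, u4)
        = pJ (x1, x2, x3, y) * k1 x1 u1 * k2 x2 u2 * k3 x3 u3 * k4 (u2, u3) u4)
    (s : ℝ) (hs : 0 ≤ s) :
    -(condEntOf p (fun ω => ω.2.2.2.1)
        (fun ω => (ω.2.2.2.2.1, ω.2.2.2.2.2.1, ω.2.2.2.2.2.2.1)))
      - s * (miOf p (fun ω => (ω.1, ω.2.1, ω.2.2.1))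
              (fun ω => (ω.2.2.2.2.1, ω.2.2.2.2.2.1, ω.2.2.2.2.2.2.1))
            + cmiOf p (fun ω => (ω.2.1, ω.2.2.1))
                (fun ω => (ω.2.2.2.2.2.1, ω.2.2.2.2.2.2.1))
                (fun ω => ω.2.2.2.2.1))
    ≥ -(condEntOf p (fun ω => ω.2.2.2.1)
          (fun ω => (ω.2.2.2.2.1, ω.2.2.2.2.2.2.2)))
      - s * miOf p (fun ω => ω.1) (fun ω => ω.2.2.2.2.1)
      - 2 * s * (miOf p (fun ω => ω.2.1) (fun ω => ω.2.2.2.2.2.1)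
          + miOf p (fun ω => ω.2.2.1) (fun ω => ω.2.2.2.2.2.2.1))
      + 2 * s * (miOf p (fun ω => ω.2.2.2.2.2.1) (fun ω => ω.2.2.2.2.1)
          + miOf p (fun ω => ω.2.2.2.2.2.2.1)
              (fun ω => (ω.2.2.2.2.1, ω.2.2.2.2.2.1))) := by
  
  have hp0 : ∀ ω, 0 ≤ p ω := by
    rintro ⟨x1, x2, x3, y, u1, u2, u3, u4⟩
    rw [hp]
    have := hpJ0 (x1, x2, x3, y); have := hk10 x1 u1; have := hk20 x2 u2
    have := hk30 x3 u3; have := hk40 (u2, u3) u4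
    positivity
  have hp1 : ∑ ω, p ω = 1 := by
    have h2 : ∑ ω, p ω = ∑ x1, ∑ x2, ∑ x3, ∑ y, pJ (x1, x2, x3, y) := by
      simp only [Fintype.sum_prod_type, hp, ← Finset.mul_sum, hk41, hk31, hk21, hk11,
        mul_one]
    rw [h2, ← hpJ1]
    simp [Fintype.sum_prod_type]
  have mX1 : ∀ x1 : X1, margOf p (fun ω => ω.1) x1 = (∑ x2, ∑ x3, ∑ y, pJ (x1, x2, x3, y)) := by
    intros
    simp only [margOf, Fintype.sum_prod_type, hp, Prod.mk.injEq, ite_and, Finset.sum_ite_irrel, Finset.sum_ite_eq, Finset.sum_ite_eq', Finset.sum_const_zero, Finset.mem_univ, if_true, ← Finset.mul_sum, ← Finset.sum_mul, hk41, hk31, hk21, hk11, mul_one]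
  have mX2 : ∀ x2 : X2, margOf p (fun ω => ω.2.1) x2 = (∑ x1, ∑ x3, ∑ y, pJ (x1, x2, x3, y)) := by
    intros
    simp only [margOf, Fintype.sum_prod_type, hp, Prod.mk.injEq, ite_and, Finset.sum_ite_irrel, Finset.sum_ite_eq, Finset.sum_ite_eq', Finset.sum_const_zero, Finset.mem_univ, if_true, ← Finset.mul_sum, ← Finset.sum_mul, hk41, hk31, hk21, hk11, mul_one]
  have mX3 : ∀ x3 : X3, margOf p (fun ω => ω.2.2.1) x3 = (∑ x1, ∑ x2, ∑ y, pJ (x1, x2, x3, y)) := by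
    intros
    simp only [margOf, Fintype.sum_prod_type, hp, Prod.mk.injEq, ite_and, Finset.sum_ite_irrel, Finset.sum_ite_eq, Finset.sum_ite_eq', Finset.sum_const_zero, Finset.mem_univ, if_true, ← Finset.mul_sum, ← Finset.sum_mul, hk41, hk31, hk21, hk11, mul_one]
  have mX123 : ∀ (x1 : X1) (x2 : X2) (x3 : X3), margOf p (fun ω => (ω.1, ω.2.1, ω.2.2.1)) (x1, x2, x3) = (∑ y, pJ (x1, x2, x3, y)) := by
    intros
    simp only [margOf, Fintype.sum_prod_type, hp, Prod.mk.injEq, ite_and, Finset.sum_ite_irrel, Finset.sum_ite_eq, Finset.sum_ite_eq', Finset.sum_const_zero, Finset.mem_univ, if_true, ← Finset.mul_sum, ← Finset.sum_mul, hk41, hk31, hk21, hk11, mul_one]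
  have mU123 : ∀ (u1 : U1) (u2 : U2) (u3 : U3), margOf p (fun ω => (ω.2.2.2.2.1, ω.2.2.2.2.2.1, ω.2.2.2.2.2.2.1)) (u1, u2, u3) = (∑ x1, ∑ x2, ∑ x3, (∑ y, pJ (x1, x2, x3, y)) * k1 x1 u1 * k2 x2 u2 * k3 x3 u3) := by
    intros
    simp only [margOf, Fintype.sum_prod_type, hp, Prod.mk.injEq, ite_and, Finset.sum_ite_irrel, Finset.sum_ite_eq, Finset.sum_ite_eq', Finset.sum_const_zero, Finset.mem_univ, if_true, ← Finset.mul_sum, ← Finset.sum_mul, hk41, hk31, hk21, hk11, mul_one]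
  have mXU : ∀ (x1 : X1) (x2 : X2) (x3 : X3) (u1 : U1) (u2 : U2) (u3 : U3), margOf p (fun ω => ((ω.1, ω.2.1, ω.2.2.1), ω.2.2.2.2.1, ω.2.2.2.2.2.1, ω.2.2.2.2.2.2.1)) ((x1, x2, x3), u1, u2, u3) = (∑ y, pJ (x1, x2, x3, y)) * k1 x1 u1 * k2 x2 u2 * k3 x3 u3 := by
    intros
    simp only [margOf, Fintype.sum_prod_type, hp, Prod.mk.injEq, ite_and, Finset.sum_ite_irrel, Finset.sum_ite_eq, Finset.sum_ite_eq', Finset.sum_const_zero, Finset.mem_univ, if_true, ← Finset.mul_sum, ← Finset.sum_mul, hk41, hk31, hk21, hk11, mul_one]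
  have mU1X23 : ∀ (u1 : U1) (x2 : X2) (x3 : X3), margOf p (fun ω => (ω.2.2.2.2.1, ω.2.1, ω.2.2.1)) (u1, x2, x3) = (∑ x1, (∑ y, pJ (x1, x2, x3, y)) * k1 x1 u1) := by
    intros
    simp only [margOf, Fintype.sum_prod_type, hp, Prod.mk.injEq, ite_and, Finset.sum_ite_irrel, Finset.sum_ite_eq, Finset.sum_ite_eq', Finset.sum_const_zero, Finset.mem_univ, if_true, ← Finset.mul_sum, ← Finset.sum_mul, hk41, hk31, hk21, hk11, mul_one]
  have mU1X23U23 : ∀ (u1 : U1) (x2 : X2) (x3 : X3) (u2 : U2) (u3 : U3), margOf p (fun ω => (ω.2.2.2.2.1, (ω.2.1, ω.2.2.1), ω.2.2.2.2.2.1, ω.2.2.2.2.2.2.1)) (u1, (x2, x3), u2, u3) = (∑ x1, (∑ y, pJ (x1, x2, x3, y)) * k1 x1 u1) * k2 x2 u2 * k3 x3 u3 := by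
    intros
    simp only [margOf, Fintype.sum_prod_type, hp, Prod.mk.injEq, ite_and, Finset.sum_ite_irrel, Finset.sum_ite_eq, Finset.sum_ite_eq', Finset.sum_const_zero, Finset.mem_univ, if_true, ← Finset.mul_sum, ← Finset.sum_mul, hk41, hk31, hk21, hk11, mul_one]
  have mX1U1 : ∀ (x1 : X1) (u1 : U1), margOf p (fun ω => (ω.1, ω.2.2.2.2.1)) (x1, u1) = (∑ x2, ∑ x3, ∑ y, pJ (x1, x2, x3, y)) * k1 x1 u1 := by
    intros
    simp only [margOf, Fintype.sum_prod_type, hp, Prod.mk.injEq, ite_and, Finset.sum_ite_irrel, Finset.sum_ite_eq, Finset.sum_ite_eq', Finset.sum_const_zero, Finset.mem_univ, if_true, ← Finset.mul_sum, ← Finset.sum_mul, hk41, hk31, hk21, hk11, mul_one]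
  have mX2U2 : ∀ (x2 : X2) (u2 : U2), margOf p (fun ω => (ω.2.1, ω.2.2.2.2.2.1)) (x2, u2) = (∑ x1, ∑ x3, ∑ y, pJ (x1, x2, x3, y)) * k2 x2 u2 := by
    intros
    simp only [margOf, Fintype.sum_prod_type, hp, Prod.mk.injEq, ite_and, Finset.sum_ite_irrel, Finset.sum_ite_eq, Finset.sum_ite_eq', Finset.sum_const_zero, Finset.mem_univ, if_true, ← Finset.mul_sum, ← Finset.sum_mul, hk41, hk31, hk21, hk11, mul_one]
  have mX3U3 : ∀ (x3 : X3) (u3 : U3), margOf p (fun ω => (ω.2.2.1, ω.2.2.2.2.2.2.1)) (x3, u3) = (∑ x1, ∑ x2, ∑ y, pJ (x1, x2, x3, y)) * k3 x3 u3 := by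
    intros
    simp only [margOf, Fintype.sum_prod_type, hp, Prod.mk.injEq, ite_and, Finset.sum_ite_irrel, Finset.sum_ite_eq, Finset.sum_ite_eq', Finset.sum_const_zero, Finset.mem_univ, if_true, ← Finset.mul_sum, ← Finset.sum_mul, hk41, hk31, hk21, hk11, mul_one]
  have mU2U1 : ∀ (u2 : U2) (u1 : U1), margOf p (fun ω => (ω.2.2.2.2.2.1, ω.2.2.2.2.1)) (u2, u1) = (∑ x1, ∑ x2, (∑ x3, ∑ y, pJ (x1, x2, x3, y)) * k1 x1 u1 * k2 x2 u2) := by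
    intros
    simp only [margOf, Fintype.sum_prod_type, hp, Prod.mk.injEq, ite_and, Finset.sum_ite_irrel, Finset.sum_ite_eq, Finset.sum_ite_eq', Finset.sum_const_zero, Finset.mem_univ, if_true, ← Finset.mul_sum, ← Finset.sum_mul, hk41, hk31, hk21, hk11, mul_one]
  have mU1U2 : ∀ (u1 : U1) (u2 : U2), margOf p (fun ω => (ω.2.2.2.2.1, ω.2.2.2.2.2.1)) (u1, u2) = (∑ x1, ∑ x2, (∑ x3, ∑ y, pJ (x1, x2, x3, y)) * k1 x1 u1 * k2 x2 u2) := by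
    intros
    simp only [margOf, Fintype.sum_prod_type, hp, Prod.mk.injEq, ite_and, Finset.sum_ite_irrel, Finset.sum_ite_eq, Finset.sum_ite_eq', Finset.sum_const_zero, Finset.mem_univ, if_true, ← Finset.mul_sum, ← Finset.sum_mul, hk41, hk31, hk21, hk11, mul_one]
  have mU3U12 : ∀ (u3 : U3) (u1 : U1) (u2 : U2), margOf p (fun ω => (ω.2.2.2.2.2.2.1, ω.2.2.2.2.1, ω.2.2.2.2.2.1)) (u3, u1, u2) = (∑ x1, ∑ x2, ∑ x3, (∑ y, pJ (x1, x2, x3, y)) * k1 x1 u1 * k2 x2 u2 * k3 x3 u3) := by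
    intros
    simp only [margOf, Fintype.sum_prod_type, hp, Prod.mk.injEq, ite_and, Finset.sum_ite_irrel, Finset.sum_ite_eq, Finset.sum_ite_eq', Finset.sum_const_zero, Finset.mem_univ, if_true, ← Finset.mul_sum, ← Finset.sum_mul, hk41, hk31, hk21, hk11, mul_one]
  have mU123Y : ∀ (u1 : U1) (u2 : U2) (u3 : U3) (y : Y), margOf p (fun ω => ((ω.2.2.2.2.1, ω.2.2.2.2.2.1, ω.2.2.2.2.2.2.1), ω.2.2.2.1)) ((u1, u2, u3), y) = (∑ x1, ∑ x2, ∑ x3, pJ (x1, x2, x3, y) * k1 x1 u1 * k2 x2 u2 * k3 x3 u3) := by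
    intros
    simp only [margOf, Fintype.sum_prod_type, hp, Prod.mk.injEq, ite_and, Finset.sum_ite_irrel, Finset.sum_ite_eq, Finset.sum_ite_eq', Finset.sum_const_zero, Finset.mem_univ, if_true, ← Finset.mul_sum, ← Finset.sum_mul, hk41, hk31, hk21, hk11, mul_one]
  have mBig : ∀ (u1 : U1) (u4 : U4) (u2 : U2) (u3 : U3), margOf p (fun ω => ((ω.2.2.2.2.1, ω.2.2.2.2.2.2.2), ω.2.2.2.2.2.1, ω.2.2.2.2.2.2.1)) ((u1, u4), u2, u3) = (∑ x1, ∑ x2, ∑ x3, (∑ y, pJ (x1, x2, x3, y)) * k1 x1 u1 * k2 x2 u2 * k3 x3 u3) * k4 (u2, u3) u4 := by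
    intros
    simp only [margOf, Fintype.sum_prod_type, hp, Prod.mk.injEq, ite_and, Finset.sum_ite_irrel, Finset.sum_ite_eq, Finset.sum_ite_eq', Finset.sum_const_zero, Finset.mem_univ, if_true, ← Finset.mul_sum, ← Finset.sum_mul, hk41, hk31, hk21, hk11, mul_one]
  have mBigY : ∀ (u1 : U1) (u4 : U4) (u2 : U2) (u3 : U3) (y : Y), margOf p (fun ω => (((ω.2.2.2.2.1, ω.2.2.2.2.2.2.2), ω.2.2.2.2.2.1, ω.2.2.2.2.2.2.1), ω.2.2.2.1)) (((u1, u4), u2, u3), y) = (∑ x1, ∑ x2, ∑ x3, pJ (x1, x2, x3, y) * k1 x1 u1 * k2 x2 u2 * k3 x3 u3) * k4 (u2, u3) u4 := by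
    intros
    simp only [margOf, Fintype.sum_prod_type, hp, Prod.mk.injEq, ite_and, Finset.sum_ite_irrel, Finset.sum_ite_eq, Finset.sum_ite_eq', Finset.sum_const_zero, Finset.mem_univ, if_true, ← Finset.mul_sum, ← Finset.sum_mul, hk41, hk31, hk21, hk11, mul_one]
  -- claim 2 : conditional mutual information nonnegativity
  have claim2 := cmi_nonneg p hp0 hp1 (fun ω => ω.2.2.2.1)
      (fun ω => (ω.2.2.2.2.2.1, ω.2.2.2.2.2.2.1)) (fun ω => (ω.2.2.2.2.1, ω.2.2.2.2.2.2.2))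
  -- claim 1 : Markov identity  H(Y,(U1,U4,U23)) - H(U1,U4,U23) = H(Y,U123) - H(U123)
  have claim1 : entOf p (fun ω => (((ω.2.2.2.2.1, ω.2.2.2.2.2.2.2), ω.2.2.2.2.2.1, ω.2.2.2.2.2.2.1), ω.2.2.2.1)) - entOf p (fun ω => ((ω.2.2.2.2.1, ω.2.2.2.2.2.2.2), ω.2.2.2.2.2.1, ω.2.2.2.2.2.2.1))
      = entOf p (fun ω => ((ω.2.2.2.2.1, ω.2.2.2.2.2.1, ω.2.2.2.2.2.2.1), ω.2.2.2.1)) - entOf p (fun ω => (ω.2.2.2.2.1, ω.2.2.2.2.2.1, ω.2.2.2.2.2.2.1)) := by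
    have h1 : entOf p (fun ω => (((ω.2.2.2.2.1, ω.2.2.2.2.2.2.2), ω.2.2.2.2.2.1, ω.2.2.2.2.2.2.1), ω.2.2.2.1)) - entOf p (fun ω => ((ω.2.2.2.2.1, ω.2.2.2.2.2.2.2), ω.2.2.2.2.2.1, ω.2.2.2.2.2.2.1))
        - (entOf p (fun ω => ((ω.2.2.2.2.1, ω.2.2.2.2.2.1, ω.2.2.2.2.2.2.1), ω.2.2.2.1)) - entOf p (fun ω => (ω.2.2.2.2.1, ω.2.2.2.2.2.1, ω.2.2.2.2.2.2.1)))
        = ∑ ω, (-(p ω * Real.log (margOf p (fun ω => (((ω.2.2.2.2.1, ω.2.2.2.2.2.2.2), ω.2.2.2.2.2.1, ω.2.2.2.2.2.2.1), ω.2.2.2.1)) (((ω.2.2.2.2.1, ω.2.2.2.2.2.2.2), ω.2.2.2.2.2.1, ω.2.2.2.2.2.2.1), ω.2.2.2.1)))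
        + p ω * Real.log (margOf p (fun ω => ((ω.2.2.2.2.1, ω.2.2.2.2.2.2.2), ω.2.2.2.2.2.1, ω.2.2.2.2.2.2.1)) ((ω.2.2.2.2.1, ω.2.2.2.2.2.2.2), ω.2.2.2.2.2.1, ω.2.2.2.2.2.2.1))
        + p ω * Real.log (margOf p (fun ω => ((ω.2.2.2.2.1, ω.2.2.2.2.2.1, ω.2.2.2.2.2.2.1), ω.2.2.2.1)) ((ω.2.2.2.2.1, ω.2.2.2.2.2.1, ω.2.2.2.2.2.2.1), ω.2.2.2.1))
        - p ω * Real.log (margOf p (fun ω => (ω.2.2.2.2.1, ω.2.2.2.2.2.1, ω.2.2.2.2.2.2.1)) (ω.2.2.2.2.1, ω.2.2.2.2.2.1, ω.2.2.2.2.2.2.1))) := by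
      simp only [entOf_eq, Finset.sum_add_distrib, Finset.sum_sub_distrib,
        Finset.sum_neg_distrib]
      ring
    have h2 : ∑ ω : X1 × X2 × X3 × Y × U1 × U2 × U3 × U4, (-(p ω * Real.log (margOf p (fun ω => (((ω.2.2.2.2.1, ω.2.2.2.2.2.2.2), ω.2.2.2.2.2.1, ω.2.2.2.2.2.2.1), ω.2.2.2.1)) (((ω.2.2.2.2.1, ω.2.2.2.2.2.2.2), ω.2.2.2.2.2.1, ω.2.2.2.2.2.2.1), ω.2.2.2.1)))
        + p ω * Real.log (margOf p (fun ω => ((ω.2.2.2.2.1, ω.2.2.2.2.2.2.2), ω.2.2.2.2.2.1, ω.2.2.2.2.2.2.1)) ((ω.2.2.2.2.1, ω.2.2.2.2.2.2.2), ω.2.2.2.2.2.1, ω.2.2.2.2.2.2.1))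
        + p ω * Real.log (margOf p (fun ω => ((ω.2.2.2.2.1, ω.2.2.2.2.2.1, ω.2.2.2.2.2.2.1), ω.2.2.2.1)) ((ω.2.2.2.2.1, ω.2.2.2.2.2.1, ω.2.2.2.2.2.2.1), ω.2.2.2.1))
        - p ω * Real.log (margOf p (fun ω => (ω.2.2.2.2.1, ω.2.2.2.2.2.1, ω.2.2.2.2.2.2.1)) (ω.2.2.2.2.1, ω.2.2.2.2.2.1, ω.2.2.2.2.2.2.1))) = 0 := by
      refine Finset.sum_eq_zero ?_
      rintro ⟨x1, x2, x3, y, u1, u2, u3, u4⟩ -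
      by_cases hz : p (x1, x2, x3, y, u1, u2, u3, u4) = 0
      · simp [hz]
      · have hppos : 0 < p (x1, x2, x3, y, u1, u2, u3, u4) :=
          lt_of_le_of_ne (hp0 _) (Ne.symm hz)
        have hne := hz; rw [hp] at hne
        have hk4pos : 0 < k4 (u2, u3) u4 :=
          lt_of_le_of_ne (hk40 _ _) (Ne.symm fun h => hne (by rw [h]; ring))
        have hEpos : 0 < (∑ x1, ∑ x2, ∑ x3, pJ (x1, x2, x3, y) * k1 x1 u1 * k2 x2 u2 * k3 x3 u3) := by
          simpa only [mU123Y] using lt_of_lt_of_le hppos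
            (le_margOf p hp0 (fun ω => ((ω.2.2.2.2.1, ω.2.2.2.2.2.1, ω.2.2.2.2.2.2.1), ω.2.2.2.1)) (x1, x2, x3, y, u1, u2, u3, u4))
        have hCpos : 0 < (∑ x1, ∑ x2, ∑ x3, (∑ y, pJ (x1, x2, x3, y)) * k1 x1 u1 * k2 x2 u2 * k3 x3 u3) := by
          simpa only [mU123] using lt_of_lt_of_le hppos
            (le_margOf p hp0 (fun ω => (ω.2.2.2.2.1, ω.2.2.2.2.2.1, ω.2.2.2.2.2.2.1)) (x1, x2, x3, y, u1, u2, u3, u4))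
        simp only [mBigY, mBig, mU123Y, mU123]
        rw [Real.log_mul hEpos.ne' hk4pos.ne', Real.log_mul hCpos.ne' hk4pos.ne']
        ring
    linarith [h1, h2]
  -- the exact identity for the s-part
  have deltaEq : miOf p (fun ω => (ω.1, ω.2.1, ω.2.2.1)) (fun ω => (ω.2.2.2.2.1, ω.2.2.2.2.2.1, ω.2.2.2.2.2.2.1))
        + cmiOf p (fun ω => (ω.2.1, ω.2.2.1)) (fun ω => (ω.2.2.2.2.2.1, ω.2.2.2.2.2.2.1)) (fun ω => ω.2.2.2.2.1)
      = miOf p (fun ω => ω.1) (fun ω => ω.2.2.2.2.1)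
        + 2 * (miOf p (fun ω => ω.2.1) (fun ω => ω.2.2.2.2.2.1) + miOf p (fun ω => ω.2.2.1) (fun ω => ω.2.2.2.2.2.2.1))
        - 2 * (miOf p (fun ω => ω.2.2.2.2.2.1) (fun ω => ω.2.2.2.2.1) + miOf p (fun ω => ω.2.2.2.2.2.2.1) (fun ω => (ω.2.2.2.2.1, ω.2.2.2.2.2.1))) := by
    have h1 : (miOf p (fun ω => (ω.1, ω.2.1, ω.2.2.1)) (fun ω => (ω.2.2.2.2.1, ω.2.2.2.2.2.1, ω.2.2.2.2.2.2.1))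
        + cmiOf p (fun ω => (ω.2.1, ω.2.2.1)) (fun ω => (ω.2.2.2.2.2.1, ω.2.2.2.2.2.2.1)) (fun ω => ω.2.2.2.2.1))
        - (miOf p (fun ω => ω.1) (fun ω => ω.2.2.2.2.1)
        + 2 * (miOf p (fun ω => ω.2.1) (fun ω => ω.2.2.2.2.2.1) + miOf p (fun ω => ω.2.2.1) (fun ω => ω.2.2.2.2.2.2.1))
        - 2 * (miOf p (fun ω => ω.2.2.2.2.2.1) (fun ω => ω.2.2.2.2.1) + miOf p (fun ω => ω.2.2.2.2.2.2.1) (fun ω => (ω.2.2.2.2.1, ω.2.2.2.2.2.1))))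
        = ∑ ω, (-(p ω * Real.log (margOf p (fun ω => (ω.1, ω.2.1, ω.2.2.1)) (ω.1, ω.2.1, ω.2.2.1)))
        - p ω * Real.log (margOf p (fun ω => (ω.2.2.2.2.1, ω.2.2.2.2.2.1, ω.2.2.2.2.2.2.1)) (ω.2.2.2.2.1, ω.2.2.2.2.2.1, ω.2.2.2.2.2.2.1))
        + p ω * Real.log (margOf p (fun ω => ((ω.1, ω.2.1, ω.2.2.1), ω.2.2.2.2.1, ω.2.2.2.2.2.1, ω.2.2.2.2.2.2.1)) ((ω.1, ω.2.1, ω.2.2.1), ω.2.2.2.2.1, ω.2.2.2.2.2.1, ω.2.2.2.2.2.2.1))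
        - p ω * Real.log (margOf p (fun ω => (ω.2.2.2.2.1, ω.2.1, ω.2.2.1)) (ω.2.2.2.2.1, ω.2.1, ω.2.2.1))
        - p ω * Real.log (margOf p (fun ω => (ω.2.2.2.2.1, ω.2.2.2.2.2.1, ω.2.2.2.2.2.2.1)) (ω.2.2.2.2.1, ω.2.2.2.2.2.1, ω.2.2.2.2.2.2.1))
        + p ω * Real.log (margOf p (fun ω => (ω.2.2.2.2.1, (ω.2.1, ω.2.2.1), ω.2.2.2.2.2.1, ω.2.2.2.2.2.2.1)) (ω.2.2.2.2.1, (ω.2.1, ω.2.2.1), ω.2.2.2.2.2.1, ω.2.2.2.2.2.2.1))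
        + p ω * Real.log (margOf p (fun ω => ω.2.2.2.2.1) ω.2.2.2.2.1)
        + p ω * Real.log (margOf p (fun ω => ω.1) ω.1)
        + p ω * Real.log (margOf p (fun ω => ω.2.2.2.2.1) ω.2.2.2.2.1)
        - p ω * Real.log (margOf p (fun ω => (ω.1, ω.2.2.2.2.1)) (ω.1, ω.2.2.2.2.1))
        + p ω * Real.log (margOf p (fun ω => ω.2.1) ω.2.1)
        + p ω * Real.log (margOf p (fun ω => ω.2.1) ω.2.1)
        + p ω * Real.log (margOf p (fun ω => ω.2.2.2.2.2.1) ω.2.2.2.2.2.1)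
        + p ω * Real.log (margOf p (fun ω => ω.2.2.2.2.2.1) ω.2.2.2.2.2.1)
        - p ω * Real.log (margOf p (fun ω => (ω.2.1, ω.2.2.2.2.2.1)) (ω.2.1, ω.2.2.2.2.2.1))
        - p ω * Real.log (margOf p (fun ω => (ω.2.1, ω.2.2.2.2.2.1)) (ω.2.1, ω.2.2.2.2.2.1))
        + p ω * Real.log (margOf p (fun ω => ω.2.2.1) ω.2.2.1)
        + p ω * Real.log (margOf p (fun ω => ω.2.2.1) ω.2.2.1)
        + p ω * Real.log (margOf p (fun ω => ω.2.2.2.2.2.2.1) ω.2.2.2.2.2.2.1)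
        + p ω * Real.log (margOf p (fun ω => ω.2.2.2.2.2.2.1) ω.2.2.2.2.2.2.1)
        - p ω * Real.log (margOf p (fun ω => (ω.2.2.1, ω.2.2.2.2.2.2.1)) (ω.2.2.1, ω.2.2.2.2.2.2.1))
        - p ω * Real.log (margOf p (fun ω => (ω.2.2.1, ω.2.2.2.2.2.2.1)) (ω.2.2.1, ω.2.2.2.2.2.2.1))
        - p ω * Real.log (margOf p (fun ω => ω.2.2.2.2.2.1) ω.2.2.2.2.2.1)
        - p ω * Real.log (margOf p (fun ω => ω.2.2.2.2.2.1) ω.2.2.2.2.2.1)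
        - p ω * Real.log (margOf p (fun ω => ω.2.2.2.2.1) ω.2.2.2.2.1)
        - p ω * Real.log (margOf p (fun ω => ω.2.2.2.2.1) ω.2.2.2.2.1)
        + p ω * Real.log (margOf p (fun ω => (ω.2.2.2.2.2.1, ω.2.2.2.2.1)) (ω.2.2.2.2.2.1, ω.2.2.2.2.1))
        + p ω * Real.log (margOf p (fun ω => (ω.2.2.2.2.2.1, ω.2.2.2.2.1)) (ω.2.2.2.2.2.1, ω.2.2.2.2.1))
        - p ω * Real.log (margOf p (fun ω => ω.2.2.2.2.2.2.1) ω.2.2.2.2.2.2.1)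
        - p ω * Real.log (margOf p (fun ω => ω.2.2.2.2.2.2.1) ω.2.2.2.2.2.2.1)
        - p ω * Real.log (margOf p (fun ω => (ω.2.2.2.2.1, ω.2.2.2.2.2.1)) (ω.2.2.2.2.1, ω.2.2.2.2.2.1))
        - p ω * Real.log (margOf p (fun ω => (ω.2.2.2.2.1, ω.2.2.2.2.2.1)) (ω.2.2.2.2.1, ω.2.2.2.2.2.1))
        + p ω * Real.log (margOf p (fun ω => (ω.2.2.2.2.2.2.1, ω.2.2.2.2.1, ω.2.2.2.2.2.1)) (ω.2.2.2.2.2.2.1, ω.2.2.2.2.1, ω.2.2.2.2.2.1))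
        + p ω * Real.log (margOf p (fun ω => (ω.2.2.2.2.2.2.1, ω.2.2.2.2.1, ω.2.2.2.2.2.1)) (ω.2.2.2.2.2.2.1, ω.2.2.2.2.1, ω.2.2.2.2.2.1))) := by
      simp only [miOf, cmiOf, entOf_eq, Finset.sum_add_distrib, Finset.sum_sub_distrib,
        Finset.sum_neg_distrib]
      ring
    have h2 : ∑ ω : X1 × X2 × X3 × Y × U1 × U2 × U3 × U4, (-(p ω * Real.log (margOf p (fun ω => (ω.1, ω.2.1, ω.2.2.1)) (ω.1, ω.2.1, ω.2.2.1)))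
        - p ω * Real.log (margOf p (fun ω => (ω.2.2.2.2.1, ω.2.2.2.2.2.1, ω.2.2.2.2.2.2.1)) (ω.2.2.2.2.1, ω.2.2.2.2.2.1, ω.2.2.2.2.2.2.1))
        + p ω * Real.log (margOf p (fun ω => ((ω.1, ω.2.1, ω.2.2.1), ω.2.2.2.2.1, ω.2.2.2.2.2.1, ω.2.2.2.2.2.2.1)) ((ω.1, ω.2.1, ω.2.2.1), ω.2.2.2.2.1, ω.2.2.2.2.2.1, ω.2.2.2.2.2.2.1))
        - p ω * Real.log (margOf p (fun ω => (ω.2.2.2.2.1, ω.2.1, ω.2.2.1)) (ω.2.2.2.2.1, ω.2.1, ω.2.2.1))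
        - p ω * Real.log (margOf p (fun ω => (ω.2.2.2.2.1, ω.2.2.2.2.2.1, ω.2.2.2.2.2.2.1)) (ω.2.2.2.2.1, ω.2.2.2.2.2.1, ω.2.2.2.2.2.2.1))
        + p ω * Real.log (margOf p (fun ω => (ω.2.2.2.2.1, (ω.2.1, ω.2.2.1), ω.2.2.2.2.2.1, ω.2.2.2.2.2.2.1)) (ω.2.2.2.2.1, (ω.2.1, ω.2.2.1), ω.2.2.2.2.2.1, ω.2.2.2.2.2.2.1))
        + p ω * Real.log (margOf p (fun ω => ω.2.2.2.2.1) ω.2.2.2.2.1)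
        + p ω * Real.log (margOf p (fun ω => ω.1) ω.1)
        + p ω * Real.log (margOf p (fun ω => ω.2.2.2.2.1) ω.2.2.2.2.1)
        - p ω * Real.log (margOf p (fun ω => (ω.1, ω.2.2.2.2.1)) (ω.1, ω.2.2.2.2.1))
        + p ω * Real.log (margOf p (fun ω => ω.2.1) ω.2.1)
        + p ω * Real.log (margOf p (fun ω => ω.2.1) ω.2.1)
        + p ω * Real.log (margOf p (fun ω => ω.2.2.2.2.2.1) ω.2.2.2.2.2.1)
        + p ω * Real.log (margOf p (fun ω => ω.2.2.2.2.2.1) ω.2.2.2.2.2.1)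
        - p ω * Real.log (margOf p (fun ω => (ω.2.1, ω.2.2.2.2.2.1)) (ω.2.1, ω.2.2.2.2.2.1))
        - p ω * Real.log (margOf p (fun ω => (ω.2.1, ω.2.2.2.2.2.1)) (ω.2.1, ω.2.2.2.2.2.1))
        + p ω * Real.log (margOf p (fun ω => ω.2.2.1) ω.2.2.1)
        + p ω * Real.log (margOf p (fun ω => ω.2.2.1) ω.2.2.1)
        + p ω * Real.log (margOf p (fun ω => ω.2.2.2.2.2.2.1) ω.2.2.2.2.2.2.1)
        + p ω * Real.log (margOf p (fun ω => ω.2.2.2.2.2.2.1) ω.2.2.2.2.2.2.1)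
        - p ω * Real.log (margOf p (fun ω => (ω.2.2.1, ω.2.2.2.2.2.2.1)) (ω.2.2.1, ω.2.2.2.2.2.2.1))
        - p ω * Real.log (margOf p (fun ω => (ω.2.2.1, ω.2.2.2.2.2.2.1)) (ω.2.2.1, ω.2.2.2.2.2.2.1))
        - p ω * Real.log (margOf p (fun ω => ω.2.2.2.2.2.1) ω.2.2.2.2.2.1)
        - p ω * Real.log (margOf p (fun ω => ω.2.2.2.2.2.1) ω.2.2.2.2.2.1)
        - p ω * Real.log (margOf p (fun ω => ω.2.2.2.2.1) ω.2.2.2.2.1)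
        - p ω * Real.log (margOf p (fun ω => ω.2.2.2.2.1) ω.2.2.2.2.1)
        + p ω * Real.log (margOf p (fun ω => (ω.2.2.2.2.2.1, ω.2.2.2.2.1)) (ω.2.2.2.2.2.1, ω.2.2.2.2.1))
        + p ω * Real.log (margOf p (fun ω => (ω.2.2.2.2.2.1, ω.2.2.2.2.1)) (ω.2.2.2.2.2.1, ω.2.2.2.2.1))
        - p ω * Real.log (margOf p (fun ω => ω.2.2.2.2.2.2.1) ω.2.2.2.2.2.2.1)
        - p ω * Real.log (margOf p (fun ω => ω.2.2.2.2.2.2.1) ω.2.2.2.2.2.2.1)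
        - p ω * Real.log (margOf p (fun ω => (ω.2.2.2.2.1, ω.2.2.2.2.2.1)) (ω.2.2.2.2.1, ω.2.2.2.2.2.1))
        - p ω * Real.log (margOf p (fun ω => (ω.2.2.2.2.1, ω.2.2.2.2.2.1)) (ω.2.2.2.2.1, ω.2.2.2.2.2.1))
        + p ω * Real.log (margOf p (fun ω => (ω.2.2.2.2.2.2.1, ω.2.2.2.2.1, ω.2.2.2.2.2.1)) (ω.2.2.2.2.2.2.1, ω.2.2.2.2.1, ω.2.2.2.2.2.1))
        + p ω * Real.log (margOf p (fun ω => (ω.2.2.2.2.2.2.1, ω.2.2.2.2.1, ω.2.2.2.2.2.1)) (ω.2.2.2.2.2.2.1, ω.2.2.2.2.1, ω.2.2.2.2.2.1))) = 0 := by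
      refine Finset.sum_eq_zero ?_
      rintro ⟨x1, x2, x3, y, u1, u2, u3, u4⟩ -
      by_cases hz : p (x1, x2, x3, y, u1, u2, u3, u4) = 0
      · simp [hz]
      · have hppos : 0 < p (x1, x2, x3, y, u1, u2, u3, u4) :=
          lt_of_le_of_ne (hp0 _) (Ne.symm hz)
        have hne := hz; rw [hp] at hne
        have hk1pos : 0 < k1 x1 u1 :=
          lt_of_le_of_ne (hk10 _ _) (Ne.symm fun h => hne (by rw [h]; ring))
        have hk2pos : 0 < k2 x2 u2 :=
          lt_of_le_of_ne (hk20 _ _) (Ne.symm fun h => hne (by rw [h]; ring))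
        have hk3pos : 0 < k3 x3 u3 :=
          lt_of_le_of_ne (hk30 _ _) (Ne.symm fun h => hne (by rw [h]; ring))
        have hA1pos : 0 < (∑ x2, ∑ x3, ∑ y, pJ (x1, x2, x3, y)) := by
          simpa only [mX1] using lt_of_lt_of_le hppos
            (le_margOf p hp0 (fun ω => ω.1) (x1, x2, x3, y, u1, u2, u3, u4))
        have hA2pos : 0 < (∑ x1, ∑ x3, ∑ y, pJ (x1, x2, x3, y)) := by
          simpa only [mX2] using lt_of_lt_of_le hppos
            (le_margOf p hp0 (fun ω => ω.2.1) (x1, x2, x3, y, u1, u2, u3, u4))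
        have hA3pos : 0 < (∑ x1, ∑ x2, ∑ y, pJ (x1, x2, x3, y)) := by
          simpa only [mX3] using lt_of_lt_of_le hppos
            (le_margOf p hp0 (fun ω => ω.2.2.1) (x1, x2, x3, y, u1, u2, u3, u4))
        have hA123pos : 0 < (∑ y, pJ (x1, x2, x3, y)) := by
          simpa only [mX123] using lt_of_lt_of_le hppos
            (le_margOf p hp0 (fun ω => (ω.1, ω.2.1, ω.2.2.1)) (x1, x2, x3, y, u1, u2, u3, u4))
        have hDpos : 0 < (∑ x1, (∑ y, pJ (x1, x2, x3, y)) * k1 x1 u1) := by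
          simpa only [mU1X23] using lt_of_lt_of_le hppos
            (le_margOf p hp0 (fun ω => (ω.2.2.2.2.1, ω.2.1, ω.2.2.1)) (x1, x2, x3, y, u1, u2, u3, u4))
        simp only [mX1, mX2, mX3, mX123, mU123, mXU, mU1X23, mU1X23U23, mX1U1, mX2U2,
          mX3U3, mU2U1, mU1U2, mU3U12]
        rw [Real.log_mul (mul_pos (mul_pos hA123pos hk1pos) hk2pos).ne' hk3pos.ne',
          Real.log_mul (mul_pos hA123pos hk1pos).ne' hk2pos.ne',
          Real.log_mul hA123pos.ne' hk1pos.ne',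
          Real.log_mul (mul_pos hDpos hk2pos).ne' hk3pos.ne',
          Real.log_mul hDpos.ne' hk2pos.ne',
          Real.log_mul hA1pos.ne' hk1pos.ne',
          Real.log_mul hA2pos.ne' hk2pos.ne',
          Real.log_mul hA3pos.ne' hk3pos.ne']
        ring
    linarith [h1, h2]
  have hsmul : s * (miOf p (fun ω => (ω.1, ω.2.1, ω.2.2.1)) (fun ω => (ω.2.2.2.2.1, ω.2.2.2.2.2.1, ω.2.2.2.2.2.2.1))
        + cmiOf p (fun ω => (ω.2.1, ω.2.2.1)) (fun ω => (ω.2.2.2.2.2.1, ω.2.2.2.2.2.2.1)) (fun ω => ω.2.2.2.2.1))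
      = s * miOf p (fun ω => ω.1) (fun ω => ω.2.2.2.2.1)
        + 2 * s * (miOf p (fun ω => ω.2.1) (fun ω => ω.2.2.2.2.2.1) + miOf p (fun ω => ω.2.2.1) (fun ω => ω.2.2.2.2.2.2.1))
        - 2 * s * (miOf p (fun ω => ω.2.2.2.2.2.1) (fun ω => ω.2.2.2.2.1) + miOf p (fun ω => ω.2.2.2.2.2.2.1) (fun ω => (ω.2.2.2.2.1, ω.2.2.2.2.2.1))) := by
    rw [deltaEq]; ring
  simp only [condEntOf]
  linarith [claim1, claim2, hsmul]
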